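/- Let R be a commutative ring, t ∈ R, n a natural number, Θ₀ and Ψ₀ n×n matrices over R, v and x column vectors in R^n, w and y row vectors in R^n, and α, β ∈ R. Let Θ₊ be the (n+1)×(n+1) block matrix with blocks Θ₀, v, w, α; let Θ₋ be the same matrix with the corner entry α replaced by α+1; and let Ψ be the (n+1)×(n+1) block matrix with blocks Ψ₀, x, y, β. Then det(t·Θ₊ − Θ₊^T + Ψ) − det(t·Θ₋ − Θ₋^T + Ψ) = (1 − t) · det(t·Θ₀ − Θ₀^T + Ψ₀). -/

import Mathlib

open Matrix

/-- The matrix computation proving the skein relation (Proposition 3.2): the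
bordered Seifert matrices `Θ₊` and `Θ₋` differ only in the corner diagonal
entry (by `1`), and the corresponding determinants differ by
`(1 − t)·det(tΘ₀ − Θ₀ᵀ + Ψ₀)`. -/
theorem stmt4 (R : Type*) [CommRing R] (t : R) (n : ℕ)
    (Θ₀ Ψ₀ : Matrix (Fin n) (Fin n) R)
    (v x : Fin n → R) (w y : Fin n → R) (α β : R)
    (Θp Θm Ψ : Matrix (Fin n ⊕ Fin 1) (Fin n ⊕ Fin 1) R)
    (hΘp : Θp = Matrix.fromBlocks Θ₀
      (Matrix.of fun i _ => v i) (Matrix.of fun _ j => w j) !![α])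
    (hΘm : Θm = Matrix.fromBlocks Θ₀
      (Matrix.of fun i _ => v i) (Matrix.of fun _ j => w j) !![α + 1])
    (hΨ : Ψ = Matrix.fromBlocks Ψ₀
      (Matrix.of fun i _ => x i) (Matrix.of fun _ j => y j) !![β]) :
    (t • Θp - Θpᵀ + Ψ).det - (t • Θm - Θmᵀ + Ψ).det
      = (1 - t) * (t • Θ₀ - Θ₀ᵀ + Ψ₀).det := by
  subst hΘp hΘm hΨ
  set Mp := t • Matrix.fromBlocks Θ₀
      (Matrix.of fun i _ => v i) (Matrix.of fun _ j => w j) !![α]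
      - (Matrix.fromBlocks Θ₀
      (Matrix.of fun i _ => v i) (Matrix.of fun _ j => w j) !![α])ᵀ
      + Matrix.fromBlocks Ψ₀
      (Matrix.of fun i _ => x i) (Matrix.of fun _ j => y j) !![β] with hMp
  have h1 : t • Matrix.fromBlocks Θ₀
      (Matrix.of fun i _ => v i) (Matrix.of fun _ j => w j) !![α + 1]
      - (Matrix.fromBlocks Θ₀
      (Matrix.of fun i _ => v i) (Matrix.of fun _ j => w j) !![α + 1])ᵀ
      + Matrix.fromBlocks Ψ₀
      (Matrix.of fun i _ => x i) (Matrix.of fun _ j => y j) !![β]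
      = Mp.updateRow (Sum.inr 0)
        (Mp (Sum.inr 0) + Pi.single (Sum.inr 0) (t - 1)) := by
    ext i j
    rcases i with i | i <;> rcases j with j | j <;>
      simp [hMp, Matrix.updateRow_apply, Matrix.fromBlocks, Fin.eq_zero,
        Pi.single_apply] <;>
      first
        | rfl
        | ring
        | (rcases j with j | j <;>
            simp [Fin.eq_zero, Pi.single_apply] <;> ring)
  have h2 : Mp.updateRow (Sum.inr 0) (Pi.single (Sum.inr 0) (t - 1))
      = Matrix.fromBlocks (t • Θ₀ - Θ₀ᵀ + Ψ₀)
        (Matrix.of fun i _ => t * v i - w i + x i) 0 !![t - 1] := by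
    ext i j
    rcases i with i | i <;> rcases j with j | j <;>
      simp [hMp, Matrix.updateRow_apply, Matrix.fromBlocks, Fin.eq_zero,
        Pi.single_apply] <;>
      exact fun h => absurd (Fin.eq_zero _) h
  rw [h1, Matrix.det_updateRow_add, Matrix.updateRow_eq_self, h2,
    Matrix.det_fromBlocks_zero₂₁]
  simp
  ring
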